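/- Let S_t: ℝⁿ → ℝⁿ solve dS_t(x)/dt = ∇V_t(S_t(x)) with S_0 = Id, where for each t the function V_t is differentiable and (−λ(t))-convex for an integrable λ: [0,∞) → ℝ. Then for all x, y and t ≥ 0: |S_t(x) − S_t(y)| ≥ |x − y| · exp(−∫₀ᵗ λ(s) ds). -/

import Mathlib

open MeasureTheory Set Filter
open scoped Topology

lemma grad_mono_aux {E : Type*} [NormedAddCommGroup E] [InnerProductSpace ℝ E]
    [CompleteSpace E] {V : E → ℝ} {c : ℝ} (hd : Differentiable ℝ V)
    (hc : ConvexOn ℝ Set.univ (fun z => V z + c * ‖z‖ ^ 2 / 2)) (a b : E) :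
    -(c * ‖a - b‖ ^ 2) ≤ (inner ℝ (a - b) (gradient V a - gradient V b) : ℝ) := by
  set W : E → ℝ := fun z => V z + c * ‖z‖ ^ 2 / 2 with hWdef
  have hWd : ∀ z : E, HasFDerivAt W
      (InnerProductSpace.toDual ℝ E (gradient V z) + (c / 2) • (2 • (innerSL ℝ z))) z := by
    intro z
    have h1 : HasFDerivAt V (InnerProductSpace.toDual ℝ E (gradient V z)) z :=
      hasGradientAt_iff_hasFDerivAt.1 (hd z).hasGradientAt
    have h2 : HasFDerivAt (fun z : E => ‖z‖ ^ 2) (2 • (innerSL ℝ z)) z :=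
      (hasStrictFDerivAt_norm_sq z).hasFDerivAt
    have h3 := h1.add (h2.const_mul (c / 2))
    have : W = fun z => V z + c / 2 * ‖z‖ ^ 2 := by funext z; simp only [hWdef]; ring
    rw [this]
    exact h3
  set L : ℝ → E := fun θ => b + θ • (a - b) with hLdef
  have hLd : ∀ θ : ℝ, HasDerivAt L (a - b) θ := by
    intro θ
    simpa [hLdef] using ((hasDerivAt_id θ).smul_const (a - b)).const_add b
  set φ : ℝ → ℝ := fun θ => W (L θ) with hφdef
  have hφd : ∀ θ, HasDerivAt φ
      ((InnerProductSpace.toDual ℝ E (gradient V (L θ)) + (c / 2) • (2 • (innerSL ℝ (L θ))))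
        (a - b)) θ := fun θ => (hWd (L θ)).comp_hasDerivAt θ (hLd θ)
  have hφc : ConvexOn ℝ Set.univ φ := by
    have h := hc.comp_affineMap (AffineMap.lineMap b a)
    have hlin : ∀ θ : ℝ, (AffineMap.lineMap b a : ℝ →ᵃ[ℝ] E) θ = L θ := by
      intro θ
      simp only [AffineMap.lineMap_apply, vsub_eq_sub, vadd_eq_add, hLdef]
      exact add_comm _ _
    have heq : (W ∘ (AffineMap.lineMap b a : ℝ →ᵃ[ℝ] E)) = φ := by
      funext θ
      simp only [Function.comp_apply, hlin θ, hφdef]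
    rwa [Set.preimage_univ, heq] at h
  have hL0 : L 0 = b := by simp [hLdef]
  have hL1 : L 1 = a := by simp [hLdef]
  have hs1 := hφc.le_slope_of_hasDerivAt (Set.mem_univ (0:ℝ)) (Set.mem_univ (1:ℝ)) one_pos (hφd 0)
  have hs2 := hφc.slope_le_of_hasDerivAt (Set.mem_univ (0:ℝ)) (Set.mem_univ (1:ℝ)) one_pos (hφd 1)
  have hkey := hs1.trans hs2
  rw [hL0, hL1] at hkey
  simp only [ContinuousLinearMap.add_apply, ContinuousLinearMap.smul_apply, innerSL_apply_apply,
    InnerProductSpace.toDual_apply_apply, smul_eq_mul, two_smul] at hkey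
  have e1 : (inner ℝ (a - b) (gradient V a - gradient V b) : ℝ)
      = (inner ℝ (gradient V a) (a - b) : ℝ) - (inner ℝ (gradient V b) (a - b) : ℝ) := by
    rw [real_inner_comm, inner_sub_left]
  have e2 : (inner ℝ a (a - b) : ℝ) - (inner ℝ b (a - b) : ℝ) = ‖a - b‖ ^ 2 := by
    rw [← inner_sub_left, real_inner_self_eq_norm_sq]
  have e3 : c / 2 * ((inner ℝ a (a - b) : ℝ) + (inner ℝ a (a - b) : ℝ))
      - c / 2 * ((inner ℝ b (a - b) : ℝ) + (inner ℝ b (a - b) : ℝ)) = c * ‖a - b‖ ^ 2 := by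
    rw [← e2]; ring
  linarith

set_option maxHeartbeats 1000000 in
theorem stmt_9 (n : ℕ) (lam : ℝ → ℝ)
    (hlam : IntegrableOn lam (Set.Ici 0))
    (V : ℝ → EuclideanSpace ℝ (Fin n) → ℝ)
    (hVdiff : ∀ t, 0 ≤ t → Differentiable ℝ (V t))
    (hVconv : ∀ t, 0 ≤ t →
      ConvexOn ℝ Set.univ (fun x => V t x + lam t * ‖x‖ ^ 2 / 2))
    (S : ℝ → EuclideanSpace ℝ (Fin n) → EuclideanSpace ℝ (Fin n))
    (hS0 : S 0 = id)
    (hSdiff : ∀ x, ∀ t, 0 ≤ t →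
      HasDerivAt (fun u => S u x) (gradient (V t) (S t x)) t)
    (x y : EuclideanSpace ℝ (Fin n)) (t : ℝ) (ht : 0 ≤ t) :
    ‖S t x - S t y‖ ≥ ‖x - y‖ * Real.exp (-∫ s in (0:ℝ)..t, lam s) := by
  classical
  set w : ℝ → EuclideanSpace ℝ (Fin n) := fun u => S u x - S u y with hwdef
  set f : ℝ → ℝ := fun u => ‖w u‖ ^ 2 with hfdef
  have hwd : ∀ u, 0 ≤ u →
      HasDerivAt w (gradient (V u) (S u x) - gradient (V u) (S u y)) u :=
    fun u hu => (hSdiff x u hu).sub (hSdiff y u hu)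
  set f' : ℝ → ℝ := fun u =>
    2 * (inner ℝ (w u) (gradient (V u) (S u x) - gradient (V u) (S u y)) : ℝ) with hf'def
  have hfd : ∀ u, 0 ≤ u → HasDerivAt f (f' u) u := fun u hu => (hwd u hu).norm_sq
  have hfnn : ∀ u, 0 ≤ f u := fun u => sq_nonneg _
  have hw0 : w 0 = x - y := by simp [hwdef, hS0]
  have hf0 : f 0 = ‖x - y‖ ^ 2 := by rw [hfdef]; simp [hw0]
  have hkey : ∀ u, 0 ≤ u → -(2 * lam u * f u) ≤ f' u := by
    intro u hu
    have h := grad_mono_aux (hVdiff u hu) (hVconv u hu) (S u x) (S u y)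
    simp only [hf'def, hfdef, hwdef]
    nlinarith [h]
  set K : ℝ := ‖x - y‖ ^ 2 with hKdef
  set I : ℝ := ∫ s in (0:ℝ)..t, lam s with hIdef
  -- main quantitative estimate
  have main : ∀ ε : ℝ, 0 < ε → K * Real.exp (-(2 * (I + ε))) ≤ f t := by
    intro ε hε
    have hlamIcc : IntegrableOn lam (Icc (0:ℝ) t) := hlam.mono_set Icc_subset_Ici_self
    haveI : (volume.restrict (Icc (0:ℝ) t)).WeaklyRegular :=
      MeasureTheory.Measure.WeaklyRegular.restrict_of_measure_ne_top
        (by rw [Real.volume_Icc]; exact ENNReal.ofReal_ne_top)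
    obtain ⟨g, hg_lt, hg_lsc, hg_int, hg_top, hg_intlt⟩ :=
      exists_lt_lowerSemicontinuous_integral_lt (μ := volume.restrict (Icc (0:ℝ) t)) lam
        hlamIcc hε
    set G : ℝ → ℝ := fun s => (g s).toReal with hGdef
    have hGint : IntegrableOn G (Icc (0:ℝ) t) := hg_int
    have hInt : ∀ p q : ℝ, p ∈ Icc (0:ℝ) t → q ∈ Icc (0:ℝ) t →
        IntervalIntegrable G volume p q := by
      intro p q hp hq
      exact (hGint.mono_set (Set.uIcc_subset_Icc hp hq)).intervalIntegrable
    set Lam : ℝ → ℝ := fun u => ∫ s in (0:ℝ)..u, G s with hLamdef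
    have hLamcont : ContinuousOn Lam (Icc (0:ℝ) t) := by
      have h := intervalIntegral.continuousOn_primitive_interval
        (a := 0) (b := t) (μ := volume) (f := G) (by rwa [Set.uIcc_of_le ht])
      rwa [Set.uIcc_of_le ht] at h
    have hLamdiff : ∀ u v : ℝ, u ∈ Icc (0:ℝ) t → v ∈ Icc (0:ℝ) t →
        Lam v - Lam u = ∫ s in u..v, G s := by
      intro u v hu hv
      have h := intervalIntegral.integral_add_adjacent_intervals
        (hInt 0 u (left_mem_Icc.2 ht) hu) (hInt u v hu hv)
      simp only [hLamdef]
      linarith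
    set c : ℝ → ℝ := fun u => if g u = ⊤ then lam u + 1 else (lam u + (g u).toReal) / 2
      with hcdef
    have hg_ne_bot : ∀ u, g u ≠ ⊥ := fun u => ne_bot_of_gt (hg_lt u)
    have hc : ∀ u, lam u < c u ∧ ((c u : ℝ) : EReal) < g u := by
      intro u
      by_cases hgu : g u = ⊤
      · constructor
        · simp only [hcdef, if_pos hgu]; linarith
        · rw [hgu]; exact EReal.coe_lt_top _
      · have hrepr : g u = ((g u).toReal : EReal) := (EReal.coe_toReal hgu (hg_ne_bot u)).symm
        have hlt : lam u < (g u).toReal := by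
          have h := hg_lt u
          rw [hrepr] at h
          exact_mod_cast h
        constructor
        · simp only [hcdef, if_neg hgu]; linarith
        · rw [hrepr]
          simp only [hcdef, if_neg hgu]
          exact_mod_cast (by linarith : (lam u + (g u).toReal) / 2 < (g u).toReal)
    have hslope : ∀ u, u ∈ Ico (0:ℝ) t → ∀ᶠ v in 𝓝[>] u, c u * (v - u) ≤ Lam v - Lam u := by
      intro u hu
      have hlsc : ∀ᶠ z in 𝓝 u, ((c u : ℝ) : EReal) < g z := hg_lsc u _ (hc u).2
      rcases Metric.eventually_nhds_iff.1 hlsc with ⟨δ, hδ, hball⟩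
      have humem : u ∈ Icc (0:ℝ) t := ⟨hu.1, hu.2.le⟩
      have hmem : Ioo u (min t (u + δ)) ∈ 𝓝[>] u :=
        Ioo_mem_nhdsGT_of_mem ⟨le_refl u, lt_min hu.2 (by linarith)⟩
      filter_upwards [hmem] with v hv
      have huv : u < v := hv.1
      have hvt : v ≤ t := le_of_lt (lt_of_lt_of_le hv.2 (min_le_left _ _))
      have hvd : v < u + δ := lt_of_lt_of_le hv.2 (min_le_right _ _)
      have hvmem : v ∈ Icc (0:ℝ) t := ⟨le_trans hu.1 huv.le, hvt⟩
      rw [hLamdiff u v humem hvmem]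
      have hle : (fun _ : ℝ => c u) ≤ᵐ[volume.restrict (Icc u v)] G := by
        have h1 : ∀ᵐ s ∂(volume.restrict (Icc u v)), g s < ⊤ :=
          hg_top.filter_mono (ae_mono (Measure.restrict_mono (Icc_subset_Icc hu.1 hvt) le_rfl))
        have h2 : ∀ᵐ s ∂(volume.restrict (Icc u v)), s ∈ Icc u v :=
          ae_restrict_mem measurableSet_Icc
        filter_upwards [h1, h2] with s hs1 hs2
        have hds : dist s u < δ := by
          rw [Real.dist_eq, abs_of_nonneg (by linarith [hs2.1])]
          linarith [hs2.2]
        have hgs := hball hds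
        have hsne : g s ≠ ⊤ := ne_of_lt hs1
        have hreprs : g s = ((g s).toReal : EReal) :=
          (EReal.coe_toReal hsne (ne_bot_of_gt hgs)).symm
        rw [hreprs] at hgs
        have : c u < (g s).toReal := by exact_mod_cast hgs
        exact this.le
      calc c u * (v - u) = ∫ _ in u..v, c u := by
            rw [intervalIntegral.integral_const]; simp [smul_eq_mul]; ring
        _ ≤ ∫ s in u..v, G s := intervalIntegral.integral_mono_ae_restrict huv.le
            intervalIntegrable_const (hInt u v humem hvmem) hle
    set hfun : ℝ → ℝ := fun u => f u * Real.exp (2 * Lam u) with hhdef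
    have hhcont : ContinuousOn hfun (Icc (0:ℝ) t) := by
      have h1 : ContinuousOn f (Icc (0:ℝ) t) :=
        fun u hu => ((hfd u hu.1).continuousAt).continuousWithinAt
      exact h1.mul (Real.continuous_exp.comp_continuousOn (continuousOn_const.mul hLamcont))
    have hh0 : hfun 0 = K := by
      simp [hhdef, hLamdef, hf0]
    have hstep : ∀ η : ℝ, 0 < η → η < K → K - hfun t ≤ η := by
      intro η hη1 hη2
      set F : ℝ → ℝ := fun u => K - hfun u with hFdef
      set F' : ℝ → ℝ := fun u => -(Real.exp (2 * Lam u) * (f' u + 2 * c u * f u)) with hF'def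
      have hFcont : ContinuousOn F (Icc (0:ℝ) t) := continuousOn_const.sub hhcont
      have hslopeF : ∀ u ∈ Ico (0:ℝ) t, ∀ r, F' u < r →
          ∃ᶠ z in 𝓝[>] u, slope F u z < r := by
        intro u hu r hr
        have hsl : Filter.Tendsto (slope f u) (𝓝[>] u) (𝓝 (f' u)) :=
          (hasDerivAt_iff_tendsto_slope.1 (hfd u hu.1)).mono_left
            (nhdsWithin_mono _ fun v hv => ne_of_gt hv)
        have hfc : Filter.Tendsto f (𝓝[>] u) (𝓝 (f u)) :=
          ((hfd u hu.1).continuousAt.tendsto).mono_left nhdsWithin_le_nhds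
        have hT : Filter.Tendsto
            (fun v => Real.exp (2 * Lam u) * (slope f u v + 2 * c u * f v))
            (𝓝[>] u) (𝓝 (Real.exp (2 * Lam u) * (f' u + 2 * c u * f u))) :=
          tendsto_const_nhds.mul (hsl.add (tendsto_const_nhds.mul hfc))
        have hgt : ∀ᶠ v in 𝓝[>] u,
            -r < Real.exp (2 * Lam u) * (slope f u v + 2 * c u * f v) := by
          apply hT.eventually (eventually_gt_nhds ?_)
          simp only [hF'def] at hr
          linarith
        have hev := hslope u hu
        have hmem2 : Ioi u ∈ 𝓝[>] u := self_mem_nhdsWithin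
        refine ((hgt.and (hev.and hmem2)).mono ?_).frequently
        rintro v ⟨hgtv, hΛv, (hv : u < v)⟩
        have hΔ : 0 < v - u := sub_pos.2 hv
        have hexp : Real.exp (2 * Lam u) * (1 + 2 * c u * (v - u)) ≤ Real.exp (2 * Lam v) := by
          have h1 : 1 + 2 * c u * (v - u) ≤ Real.exp (2 * c u * (v - u)) := by
            have := Real.add_one_le_exp (2 * c u * (v - u)); linarith
          calc Real.exp (2 * Lam u) * (1 + 2 * c u * (v - u))
              ≤ Real.exp (2 * Lam u) * Real.exp (2 * c u * (v - u)) :=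
                mul_le_mul_of_nonneg_left h1 (Real.exp_pos _).le
            _ = Real.exp (2 * Lam u + 2 * c u * (v - u)) := (Real.exp_add _ _).symm
            _ ≤ Real.exp (2 * Lam v) := Real.exp_le_exp.2 (by linarith [hΛv])
        have hhv : Real.exp (2 * Lam u) * (f v * (1 + 2 * c u * (v - u))) ≤ hfun v := by
          have : hfun v = f v * Real.exp (2 * Lam v) := rfl
          rw [this]
          calc Real.exp (2 * Lam u) * (f v * (1 + 2 * c u * (v - u)))
              = f v * (Real.exp (2 * Lam u) * (1 + 2 * c u * (v - u))) := by ring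
            _ ≤ f v * Real.exp (2 * Lam v) := mul_le_mul_of_nonneg_left hexp (hfnn v)
        have hhu : hfun u = f u * Real.exp (2 * Lam u) := rfl
        have hkey2 : hfun u - hfun v < r * (v - u) := by
          have h2 : hfun u - hfun v
              ≤ Real.exp (2 * Lam u) * (f u - f v * (1 + 2 * c u * (v - u))) := by
            rw [hhu]; nlinarith [hhv]
          have h3 : Real.exp (2 * Lam u) * (f u - f v * (1 + 2 * c u * (v - u)))
              = -((v - u) * (Real.exp (2 * Lam u) * (slope f u v + 2 * c u * f v))) := by
            rw [slope_def_field]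
            field_simp
            ring
          rw [h3] at h2
          nlinarith [hgtv, hΔ]
        rw [slope_def_field, div_lt_iff₀ hΔ]
        have hFv : F v - F u = hfun u - hfun v := by simp only [hFdef]; ring
        rw [hFv]
        exact hkey2
      have hbound : ∀ u ∈ Ico (0:ℝ) t, F u = η → F' u < 0 := by
        intro u hu hFu
        have hhuval : hfun u = f u * Real.exp (2 * Lam u) := rfl
        have hfu : 0 < f u := by
          have hhu : hfun u = K - η := by
            simp only [hFdef] at hFu; linarith
          have hpos : 0 < hfun u := by rw [hhu]; linarith
          rw [hhuval] at hpos
          nlinarith [Real.exp_pos (2 * Lam u), hfnn u]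
        have h1 := hkey u hu.1
        have h2 : lam u < c u := (hc u).1
        have h3 : 0 < f' u + 2 * c u * f u := by nlinarith
        simp only [hF'def]
        have h4 := mul_pos (Real.exp_pos (2 * Lam u)) h3
        linarith
      have happ := image_le_of_liminf_slope_right_lt_deriv_boundary
        (f := F) (f' := F') (a := 0) (b := t) hFcont hslopeF
        (B := fun _ => η) (B' := fun _ => 0)
        (by simp only [hFdef, hh0]; linarith)
        (fun _ => hasDerivAt_const _ _)
        (fun u hu hFu => hbound u hu hFu)
      have := happ (right_mem_Icc.2 ht)
      simpa only [hFdef] using this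
    have hht : 0 ≤ hfun t := mul_nonneg (hfnn t) (Real.exp_pos _).le
    have hclaim : K ≤ hfun t := by
      by_contra hcon
      push_neg at hcon
      have hKpos : 0 < K - hfun t := by linarith
      have hη := hstep ((K - hfun t) / 2) (by linarith) (by linarith)
      linarith
    have hLamle : Lam t ≤ I + ε := by
      have h1 : Lam t = ∫ s in Icc (0:ℝ) t, G s := by
        show (∫ s in (0:ℝ)..t, G s) = _
        rw [intervalIntegral.integral_of_le ht, ← integral_Icc_eq_integral_Ioc]
      have h2 : I = ∫ s in Icc (0:ℝ) t, lam s := by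
        show (∫ s in (0:ℝ)..t, lam s) = _
        rw [intervalIntegral.integral_of_le ht, ← integral_Icc_eq_integral_Ioc]
      rw [h1, h2]
      exact le_of_lt hg_intlt
    have hfinal : K * Real.exp (-(2 * Lam t)) ≤ f t := by
      have hcl := hclaim
      have hepos := Real.exp_pos (2 * Lam t)
      have hhtval : hfun t = f t * Real.exp (2 * Lam t) := rfl
      rw [hhtval] at hcl
      have h2 : K * Real.exp (-(2 * Lam t)) = K / Real.exp (2 * Lam t) := by
        rw [Real.exp_neg]; ring
      rw [h2, div_le_iff₀ hepos]
      linarith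
    calc K * Real.exp (-(2 * (I + ε)))
        ≤ K * Real.exp (-(2 * Lam t)) := by
          apply mul_le_mul_of_nonneg_left (Real.exp_le_exp.2 (by linarith))
            (by rw [hKdef]; positivity)
      _ ≤ f t := hfinal
  -- conclude
  have hnn : 0 ≤ ‖x - y‖ * Real.exp (-I) := by positivity
  have final : ∀ ε : ℝ, 0 < ε → ‖x - y‖ * Real.exp (-(I + ε)) ≤ ‖w t‖ := by
    intro ε hε
    have h1 := main ε hε
    have h2 : (‖x - y‖ * Real.exp (-(I + ε))) ^ 2 = K * Real.exp (-(2 * (I + ε))) := by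
      rw [mul_pow, ← Real.exp_nat_mul]
      ring_nf
      rw [hKdef]; ring
    have h3 : (‖x - y‖ * Real.exp (-(I + ε))) ^ 2 ≤ ‖w t‖ ^ 2 := by
      rw [h2]; exact h1
    have h4 : 0 ≤ ‖x - y‖ * Real.exp (-(I + ε)) := by positivity
    exact (pow_le_pow_iff_left₀ h4 (norm_nonneg _) (by norm_num)).1 h3
  have hlim : Filter.Tendsto (fun ε : ℝ => ‖x - y‖ * Real.exp (-(I + ε)))
      (𝓝[>] 0) (𝓝 (‖x - y‖ * Real.exp (-I))) := by
    have hco : Continuous (fun ε : ℝ => ‖x - y‖ * Real.exp (-(I + ε))) := by continuity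
    have h : Filter.Tendsto (fun ε : ℝ => ‖x - y‖ * Real.exp (-(I + ε))) (𝓝[>] (0:ℝ))
        (𝓝 (‖x - y‖ * Real.exp (-(I + 0)))) := (hco.tendsto 0).mono_left nhdsWithin_le_nhds
    simpa using h
  have : ‖x - y‖ * Real.exp (-I) ≤ ‖w t‖ :=
    le_of_tendsto hlim (eventually_nhdsWithin_of_forall fun ε hε => final ε hε)
  simpa [hwdef] using this
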